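/- Let t ≥ 2 be an integer, let α > 0 be a real number, let k be a positive integer, and let G be a simple graph with Δ(G) ≥ α. Let s_1, …, s_{t−1} ≥ 1 be real numbers, let 1 ≤ ℓ ≤ t, let J ⊆ [k], and fix vertices u_j ∈ V(G) for each j ∈ J. Then for any fixed vertices x_1, …, x_t of the k-th tensor power G^k, the number of (s_1, …, s_{t−1})-good t-ladders in G^k of the form (x_1, y_1, x_2, y_2, …, x_t, y_t) satisfying y_ℓ(j) = u_j for all j ∈ J is at most Δ(G)^k · (∏_{i=1}^{t−1} s_i) · α^{−|J|}. -/

import Mathlib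

open SimpleGraph Finset

/-- The codegree of `u` and `v` in `H`: the number of common neighbours. -/
noncomputable def codeg {V : Type*} (H : SimpleGraph V) (u v : V) : ℕ :=
  (H.neighborSet u ∩ H.neighborSet v).ncard

/-- The `k`-th tensor power of `G`: vertices are `k`-tuples of vertices of `G`,
with two tuples adjacent iff they are adjacent in `G` in every coordinate. -/
def tensorPow {V : Type*} (G : SimpleGraph V) (k : ℕ) : SimpleGraph (Fin k → V) where
  Adj x y := x ≠ y ∧ ∀ j, G.Adj (x j) (y j)
  symm := ⟨fun x y h => ⟨h.1.symm, fun j => (h.2 j).symm⟩⟩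
  loopless := ⟨fun x h => h.1 rfl⟩

/-- A `t`-ladder in `H` (vertices indexed from `0` to `t-1`):
`x_i x_{i+1}`, `y_i y_{i+1}` are edges for `i < t-1`, and `x_i y_i` is an
edge for all `i`. -/
def IsLadder {W : Type*} (H : SimpleGraph W) (t : ℕ) (x y : Fin t → W) : Prop :=
  (∀ i : Fin t, H.Adj (x i) (y i)) ∧
  ∀ (i : Fin t) (h : (i : ℕ) + 1 < t),
    H.Adj (x i) (x ⟨(i : ℕ) + 1, h⟩) ∧ H.Adj (y i) (y ⟨(i : ℕ) + 1, h⟩)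

/-- An `(s_0, …, s_{t-2})`-good `t`-ladder in `G^k` (with respect to the
parameter `α`): a `t`-ladder `(x_0, y_0, …, x_{t-1}, y_{t-1})` in `G^k` such
that for each `i < t-1` the codegree of `x_{i+1}` and `y_i` in `G^k` is at most
`s i`, for each `i < t-1` and each coordinate `j` the codegree of `x_{i+1}(j)`
and `y_i(j)` in `G` is at least `α`, and in each coordinate `j` the `2t`
vertices `x_0(j), …, x_{t-1}(j), y_0(j), …, y_{t-1}(j)` are pairwise distinct. -/
def IsGoodLadder {V : Type*} (G : SimpleGraph V) (k t : ℕ) (α : ℝ) (s : ℕ → ℝ)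
    (x y : Fin t → (Fin k → V)) : Prop :=
  IsLadder (tensorPow G k) t x y ∧
  (∀ (i : Fin t) (h : (i : ℕ) + 1 < t),
    (codeg (tensorPow G k) (x ⟨(i : ℕ) + 1, h⟩) (y i) : ℝ) ≤ s i ∧
    ∀ j : Fin k, α ≤ (codeg G (x ⟨(i : ℕ) + 1, h⟩ j) (y i j) : ℝ)) ∧
  ∀ j : Fin k,
    Function.Injective (fun p : Fin t × Bool => if p.2 then x p.1 j else y p.1 j)

/-- `codeg` as the cardinality of the intersection of neighbour finsets. -/
lemma codeg_eq_card {V : Type*} [Fintype V] [DecidableEq V] (G : SimpleGraph V)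
    [DecidableRel G.Adj] (a b : V) :
    codeg G a b = (G.neighborFinset a ∩ G.neighborFinset b).card := by
  rw [codeg, ← Set.ncard_coe_finset]
  congr 1
  ext w
  simp [SimpleGraph.mem_neighborFinset, SimpleGraph.mem_neighborSet]

/-- The codegree in the tensor power is the product of coordinatewise codegrees. -/
lemma codeg_tensorPow {V : Type*} [Fintype V] [DecidableEq V] (G : SimpleGraph V)
    [DecidableRel G.Adj] {k : ℕ} (hk : 0 < k) (a b : Fin k → V) :
    codeg (tensorPow G k) a b
      = ∏ j, (G.neighborFinset (a j) ∩ G.neighborFinset (b j)).card := by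
  have hset : (tensorPow G k).neighborSet a ∩ (tensorPow G k).neighborSet b
      = ↑(Fintype.piFinset fun j => G.neighborFinset (a j) ∩ G.neighborFinset (b j)) := by
    ext w
    simp only [Set.mem_inter_iff, SimpleGraph.mem_neighborSet, Finset.mem_coe,
      Fintype.mem_piFinset, Finset.mem_inter, SimpleGraph.mem_neighborFinset, tensorPow]
    constructor
    · rintro ⟨⟨-, h1⟩, -, h2⟩ j
      exact ⟨h1 j, h2 j⟩
    · intro hw
      have hne : ∀ (v : Fin k → V), (∀ j, G.Adj (v j) (w j)) → v ≠ w := by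
        intro v hv hvw
        exact (G.ne_of_adj (hv ⟨0, hk⟩)) (congrFun hvw ⟨0, hk⟩)
      exact ⟨⟨hne a fun j => (hw j).1, fun j => (hw j).1⟩,
             hne b fun j => (hw j).2, fun j => (hw j).2⟩
  rw [codeg, hset, Set.ncard_coe_finset, Fintype.card_piFinset]

open scoped Classical in
/-- Chain counting: if `y 0` lies in `B` and each `y (i+1)` lies in a finset
`C i (y i)` with `|B| ≤ b` and `|C i z| ≤ c i`, then the number of such chains
is at most `b * ∏ c i`. -/
lemma chain_bound {A : Type*} [Fintype A] :
    ∀ (n : ℕ) (B : Finset A) (C : ℕ → A → Finset A) (c : ℕ → ℝ) (b : ℝ),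
      (B.card : ℝ) ≤ b → 0 ≤ b → (∀ i, i < n → ∀ z, ((C i z).card : ℝ) ≤ c i) →
      (∀ i, i < n → 0 ≤ c i) →
      (((univ : Finset (Fin (n+1) → A)).filter (fun y =>
          y 0 ∈ B ∧ ∀ (i : ℕ) (h : i + 1 < n + 1),
            y ⟨i+1, h⟩ ∈ C i (y ⟨i, Nat.lt_of_succ_lt h⟩))).card : ℝ)
        ≤ b * ∏ i ∈ range n, c i := by
  intro n
  induction n with
  | zero =>
    intro B C c b hB hb _ _
    simp only [range_zero, prod_empty, mul_one]
    refine le_trans (Nat.cast_le.2 ?_) hB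
    apply Finset.card_le_card_of_injOn (fun y => y 0)
    · intro y hy
      simp only [Finset.mem_coe, mem_filter] at hy
      exact hy.2.1
    · intro y1 _ y2 _ h
      funext i
      have hi : i = 0 := Fin.ext (Nat.lt_one_iff.mp i.isLt)
      rw [hi]; exact h
  | succ n ih =>
    intro B C c b hB hb hC hc
    set S := (univ : Finset (Fin (n+2) → A)).filter (fun y =>
        y 0 ∈ B ∧ ∀ (i : ℕ) (h : i + 1 < n + 2),
          y ⟨i+1, h⟩ ∈ C i (y ⟨i, Nat.lt_of_succ_lt h⟩)) with hS
    set T := (univ : Finset (Fin (n+1) → A)).filter (fun y =>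
        y 0 ∈ B ∧ ∀ (i : ℕ) (h : i + 1 < n + 1),
          y ⟨i+1, h⟩ ∈ C i (y ⟨i, Nat.lt_of_succ_lt h⟩)) with hT
    have hmaps : ∀ y ∈ S, (fun i : Fin (n+1) => y i.castSucc) ∈ T := by
      intro y hy
      simp only [hS, hT, mem_filter, mem_univ, true_and] at hy ⊢
      refine ⟨?_, ?_⟩
      · have h0 : ((0 : Fin (n+1)).castSucc) = (0 : Fin (n+2)) := rfl
        rw [h0]; exact hy.1
      · intro i h
        simp only [Fin.castSucc_mk]
        exact hy.2 i (by omega)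
    have key : S.card = ∑ z ∈ T,
        (S.filter (fun y => (fun i : Fin (n+1) => y i.castSucc) = z)).card :=
      card_eq_sum_card_fiberwise hmaps
    have hfib : ∀ z ∈ T,
        ((S.filter (fun y => (fun i : Fin (n+1) => y i.castSucc) = z)).card : ℝ) ≤ c n := by
      intro z hz
      refine le_trans (Nat.cast_le.2 ?_) (hC n (Nat.lt_succ_self n) (z ⟨n, Nat.lt_succ_self n⟩))
      apply Finset.card_le_card_of_injOn (fun y => y (Fin.last (n+1)))
      · intro y hy
        simp only [Finset.mem_coe, mem_filter, hS, mem_univ, true_and] at hy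
        obtain ⟨⟨-, hy2⟩, hyz⟩ := hy
        have h1 : y ⟨n+1, Nat.lt_succ_self (n+1)⟩ ∈ C n (y ⟨n, Nat.lt_succ_of_lt (Nat.lt_succ_self n)⟩) :=
          hy2 n (Nat.lt_succ_self (n+1))
        have h2 : y ⟨n, Nat.lt_succ_of_lt (Nat.lt_succ_self n)⟩ = z ⟨n, Nat.lt_succ_self n⟩ := by
          have := congrFun hyz ⟨n, Nat.lt_succ_self n⟩
          simpa [Fin.castSucc_mk] using this
        rw [← h2]
        exact h1
      · intro y1 hy1 y2 hy2 h
        simp only [Finset.coe_filter, Set.mem_setOf_eq] at hy1 hy2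
        funext i
        rcases Nat.lt_or_ge (i : ℕ) (n+1) with hi | hi
        · have e1 : i = (Fin.castSucc ⟨(i : ℕ), hi⟩) := by
            simp [Fin.castSucc_mk]
          rw [e1]
          have := hy1.2.trans hy2.2.symm
          exact congrFun this ⟨(i : ℕ), hi⟩
        · have e1 : i = Fin.last (n+1) := by
            apply Fin.ext
            simp only [Fin.val_last]
            exact Nat.le_antisymm (Nat.lt_succ_iff.mp i.isLt) hi
          rw [e1]; exact h
    have hT' : (T.card : ℝ) ≤ b * ∏ i ∈ range n, c i :=
      ih B C c b hB hb (fun i hi => hC i (Nat.lt_succ_of_lt hi)) (fun i hi => hc i (Nat.lt_succ_of_lt hi))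
    have hcn : 0 ≤ c n := hc n (Nat.lt_succ_self n)
    calc (S.card : ℝ) = ∑ z ∈ T,
          ((S.filter (fun y => (fun i : Fin (n+1) => y i.castSucc) = z)).card : ℝ) := by
            rw [key]; push_cast; rfl
      _ ≤ ∑ _z ∈ T, c n := Finset.sum_le_sum hfib
      _ = T.card * c n := by rw [Finset.sum_const, nsmul_eq_mul]
      _ ≤ (b * ∏ i ∈ range n, c i) * c n := by
            exact mul_le_mul_of_nonneg_right hT' hcn
      _ = b * ∏ i ∈ range (n+1), c i := by rw [prod_range_succ]; ring

/-- Lemma 2.5(a): for fixed `x_0, …, x_{t-1}` in `G^k`, `ℓ`, `J ⊆ [k]` and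
fixed vertices `u j` for `j ∈ J`, the number of good `t`-ladders
`(x_0, y_0, …, x_{t-1}, y_{t-1})` with `y_ℓ(j) = u j` for all `j ∈ J` is at
most `Δ(G)^k · (∏ s_i) · α^{-|J|}`. -/
theorem few_bad_ladders_a (t : ℕ) (ht : 2 ≤ t) (α : ℝ) (hα : 0 < α)
    (k : ℕ) (hk : 0 < k) (V : Type) [Fintype V] (G : SimpleGraph V)
    [DecidableRel G.Adj] (hΔ : α ≤ (G.maxDegree : ℝ))
    (s : ℕ → ℝ) (hs : ∀ i, i < t - 1 → 1 ≤ s i)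
    (ℓ : Fin t) (J : Finset (Fin k)) (u : Fin k → V)
    (x : Fin t → (Fin k → V)) :
    (Nat.card {y : Fin t → (Fin k → V) //
        IsGoodLadder G k t α s x y ∧ ∀ j ∈ J, y ℓ j = u j} : ℝ) ≤
      (G.maxDegree : ℝ) ^ k * (∏ i ∈ range (t - 1), s i) * α ^ (-(J.card : ℤ)) := by
  classical
  obtain ⟨n, rfl⟩ : ∃ n, t = n + 2 := ⟨t - 2, by omega⟩
  have hrange : n + 2 - 1 = n + 1 := rfl
  set Δ : ℝ := (G.maxDegree : ℝ) with hΔdef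
  have hΔ0 : (0 : ℝ) < Δ := lt_of_lt_of_le hα hΔ
  have hJk : J.card ≤ k := by
    have := Finset.card_le_univ J
    simpa using this
  set β : ℝ := (α ^ J.card)⁻¹ with hβdef
  have hβ0 : (0 : ℝ) < β := by rw [hβdef]; positivity
  -- the first-step finset
  set B : Finset (Fin k → V) := Fintype.piFinset (fun j =>
      if (0 : Fin (n+2)) = ℓ ∧ j ∈ J then G.neighborFinset (x 0 j) ∩ {u j}
      else G.neighborFinset (x 0 j)) with hBdef
  -- the step finsets
  set C : ℕ → (Fin k → V) → Finset (Fin k → V) := fun i z =>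
      if h : i + 1 < n + 2 then
        if ((codeg (tensorPow G k) (x ⟨i+1, h⟩) z : ℝ) ≤ s i
            ∧ ∀ j, α ≤ (codeg G (x ⟨i+1, h⟩ j) (z j) : ℝ)) then
          Fintype.piFinset (fun j =>
            if (⟨i+1, h⟩ : Fin (n+2)) = ℓ ∧ j ∈ J then
              (G.neighborFinset (x ⟨i+1, h⟩ j) ∩ G.neighborFinset (z j)) ∩ {u j}
            else G.neighborFinset (x ⟨i+1, h⟩ j) ∩ G.neighborFinset (z j))
        else ∅
      else ∅ with hCdef
  set b : ℝ := Δ ^ k * (if (ℓ : ℕ) = 0 then β else 1) with hbdef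
  set c : ℕ → ℝ := fun i => s i * (if i + 1 = (ℓ : ℕ) then β else 1) with hcdef
  have hite : ∀ (P : Prop) [Decidable P], (0 : ℝ) ≤ if P then β else 1 := by
    intro P hP
    split_ifs
    · exact hβ0.le
    · norm_num
  -- a helper for products of if-then-else over J
  have hsplit : ∀ (g : Fin k → ℝ), (∀ j, 0 ≤ g j) →
      ∏ j, (if j ∈ J then (1:ℝ) else g j) = ∏ j ∈ Jᶜ, g j := by
    intro g hg
    rw [← Finset.prod_mul_prod_compl J (fun j => if j ∈ J then (1:ℝ) else g j)]
    rw [Finset.prod_eq_one (fun j hj => if_pos hj), one_mul]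
    refine Finset.prod_congr rfl (fun j hj => if_neg ?_)
    simpa using hj
  have hdegΔ : ∀ w : V, ((G.neighborFinset w).card : ℝ) ≤ Δ := by
    intro w
    rw [hΔdef]
    exact_mod_cast G.degree_le_maxDegree w
  -- bound on |B|
  have hBcard : (B.card : ℝ) ≤ b := by
    rw [hBdef, Fintype.card_piFinset, hbdef]
    push_cast
    by_cases h0 : (ℓ : ℕ) = 0
    · rw [if_pos h0]
      have hfin0 : (0 : Fin (n+2)) = ℓ := by
        apply Fin.ext
        simp [h0]
      have hpt : ∀ j : Fin k,
          (((if (0 : Fin (n+2)) = ℓ ∧ j ∈ J then G.neighborFinset (x 0 j) ∩ {u j}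
            else G.neighborFinset (x 0 j)).card : ℝ)) ≤ if j ∈ J then (1:ℝ) else Δ := by
        intro j
        by_cases hj : j ∈ J
        · rw [if_pos ⟨hfin0, hj⟩, if_pos hj]
          have : (G.neighborFinset (x 0 j) ∩ {u j}).card ≤ ({u j} : Finset V).card :=
            Finset.card_le_card (Finset.inter_subset_right)
          simpa using this
        · rw [if_neg (by tauto), if_neg hj]
          exact hdegΔ _
      calc (∏ j, (((if (0 : Fin (n+2)) = ℓ ∧ j ∈ J then G.neighborFinset (x 0 j) ∩ {u j}
            else G.neighborFinset (x 0 j)).card : ℝ)))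
          ≤ ∏ j, (if j ∈ J then (1:ℝ) else Δ) :=
            Finset.prod_le_prod (fun j _ => by positivity) (fun j _ => hpt j)
        _ = ∏ j ∈ Jᶜ, Δ := hsplit _ (fun _ => hΔ0.le)
        _ = Δ ^ (k - J.card) := by
            rw [Finset.prod_const, Finset.card_compl]
            simp
        _ ≤ Δ ^ k * β := by
            rw [hβdef, ← div_eq_mul_inv, le_div_iff₀ (by positivity)]
            calc Δ ^ (k - J.card) * α ^ J.card ≤ Δ ^ (k - J.card) * Δ ^ J.card :=
                  mul_le_mul_of_nonneg_left (pow_le_pow_left₀ hα.le hΔ _) (by positivity)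
              _ = Δ ^ k := by rw [← pow_add]; congr 1; omega
    · rw [if_neg h0, mul_one]
      have hne : ∀ j : Fin k, ¬((0 : Fin (n+2)) = ℓ ∧ j ∈ J) := by
        intro j hc
        exact h0 (by rw [← hc.1]; rfl)
      calc (∏ j, (((if (0 : Fin (n+2)) = ℓ ∧ j ∈ J then G.neighborFinset (x 0 j) ∩ {u j}
            else G.neighborFinset (x 0 j)).card : ℝ)))
          = ∏ j, ((G.neighborFinset (x 0 j)).card : ℝ) := by
            refine Finset.prod_congr rfl (fun j _ => by rw [if_neg (hne j)])
        _ ≤ ∏ _j : Fin k, Δ :=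
            Finset.prod_le_prod (fun j _ => by positivity) (fun j _ => hdegΔ _)
        _ = Δ ^ k := by rw [Finset.prod_const]; simp
  -- bound on |C i z|
  have hCcard : ∀ i, i < n + 1 → ∀ z, ((C i z).card : ℝ) ≤ c i := by
    intro i hi z
    have h : i + 1 < n + 2 := by omega
    have hs1 : 1 ≤ s i := hs i (by omega)
    have hc0 : (0:ℝ) ≤ c i := by
      rw [hcdef]
      exact mul_nonneg (by linarith) (hite _)
    rw [hCdef]
    simp only [dif_pos h]
    by_cases hg : ((codeg (tensorPow G k) (x ⟨i+1, h⟩) z : ℝ) ≤ s i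
        ∧ ∀ j, α ≤ (codeg G (x ⟨i+1, h⟩ j) (z j) : ℝ))
    swap
    · rw [if_neg hg]
      simpa using hc0
    rw [if_pos hg]
    obtain ⟨hg1, hg2⟩ := hg
    set d : Fin k → ℝ := fun j =>
      ((G.neighborFinset (x ⟨i+1, h⟩ j) ∩ G.neighborFinset (z j)).card : ℝ) with hddef
    have hαd : ∀ j, α ≤ d j := by
      intro j
      have := hg2 j
      rwa [codeg_eq_card] at this
    have hd0 : ∀ j, (0:ℝ) ≤ d j := fun j => le_trans hα.le (hαd j)
    have hprodd : ∏ j, d j ≤ s i := by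
      refine le_trans ?_ hg1
      rw [codeg_tensorPow G hk]
      push_cast
      exact le_refl _
    rw [Fintype.card_piFinset]
    push_cast
    by_cases hℓ : i + 1 = (ℓ : ℕ)
    · have hfin : (⟨i+1, h⟩ : Fin (n+2)) = ℓ := Fin.ext hℓ
      have hpt : ∀ j : Fin k,
          (((if (⟨i+1, h⟩ : Fin (n+2)) = ℓ ∧ j ∈ J then
              (G.neighborFinset (x ⟨i+1, h⟩ j) ∩ G.neighborFinset (z j)) ∩ {u j}
            else G.neighborFinset (x ⟨i+1, h⟩ j) ∩ G.neighborFinset (z j)).card : ℝ))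
            ≤ if j ∈ J then (1:ℝ) else d j := by
        intro j
        by_cases hj : j ∈ J
        · rw [if_pos ⟨hfin, hj⟩, if_pos hj]
          have : ((G.neighborFinset (x ⟨i+1, h⟩ j) ∩ G.neighborFinset (z j)) ∩ {u j}).card
              ≤ ({u j} : Finset V).card := Finset.card_le_card (Finset.inter_subset_right)
          simpa using this
        · rw [if_neg (by tauto), if_neg hj]
      have hJd : α ^ J.card ≤ ∏ j ∈ J, d j := by
        calc α ^ J.card = ∏ _j ∈ J, α := (Finset.prod_const α).symm
          _ ≤ ∏ j ∈ J, d j :=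
            Finset.prod_le_prod (fun j _ => hα.le) (fun j _ => hαd j)
      have hcompl : ∏ j ∈ Jᶜ, d j ≤ s i * β := by
        rw [hβdef, ← div_eq_mul_inv, le_div_iff₀ (by positivity)]
        calc (∏ j ∈ Jᶜ, d j) * α ^ J.card ≤ (∏ j ∈ Jᶜ, d j) * ∏ j ∈ J, d j :=
              mul_le_mul_of_nonneg_left hJd (Finset.prod_nonneg (fun j _ => hd0 j))
          _ = ∏ j, d j := by rw [mul_comm, Finset.prod_mul_prod_compl]
          _ ≤ s i := hprodd
      calc (∏ j, (((if (⟨i+1, h⟩ : Fin (n+2)) = ℓ ∧ j ∈ J then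
              (G.neighborFinset (x ⟨i+1, h⟩ j) ∩ G.neighborFinset (z j)) ∩ {u j}
            else G.neighborFinset (x ⟨i+1, h⟩ j) ∩ G.neighborFinset (z j)).card : ℝ)))
          ≤ ∏ j, (if j ∈ J then (1:ℝ) else d j) :=
            Finset.prod_le_prod (fun j _ => Nat.cast_nonneg _) (fun j _ => hpt j)
        _ = ∏ j ∈ Jᶜ, d j := hsplit _ hd0
        _ ≤ s i * β := hcompl
        _ = c i := by rw [hcdef]; simp only [if_pos hℓ]
    · have hne : ∀ j : Fin k, ¬((⟨i+1, h⟩ : Fin (n+2)) = ℓ ∧ j ∈ J) := by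
        intro j hcon
        exact hℓ (by rw [← hcon.1])
      calc (∏ j, (((if (⟨i+1, h⟩ : Fin (n+2)) = ℓ ∧ j ∈ J then
              (G.neighborFinset (x ⟨i+1, h⟩ j) ∩ G.neighborFinset (z j)) ∩ {u j}
            else G.neighborFinset (x ⟨i+1, h⟩ j) ∩ G.neighborFinset (z j)).card : ℝ)))
          = ∏ j, d j := Finset.prod_congr rfl (fun j _ => by rw [if_neg (hne j)])
        _ ≤ s i := hprodd
        _ = c i := by rw [hcdef]; simp only [if_neg hℓ, mul_one]
  -- every good ladder satisfies the chain conditions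
  have himp : ∀ y : Fin (n+2) → (Fin k → V),
      (IsGoodLadder G k (n+2) α s x y ∧ ∀ j ∈ J, y ℓ j = u j) →
      (y 0 ∈ B ∧ ∀ (i : ℕ) (h : i + 1 < n + 2),
        y ⟨i+1, h⟩ ∈ C i (y ⟨i, Nat.lt_of_succ_lt h⟩)) := by
    rintro y ⟨⟨⟨h1, h2⟩, hg, -⟩, hJy⟩
    constructor
    · rw [hBdef, Fintype.mem_piFinset]
      intro j
      have hadj : G.Adj (x 0 j) (y 0 j) := (show _ ∧ _ from h1 0).2 j
      by_cases hcnd : (0 : Fin (n+2)) = ℓ ∧ j ∈ J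
      · rw [if_pos hcnd]
        refine Finset.mem_inter.2 ⟨(G.mem_neighborFinset _ _).2 hadj, ?_⟩
        rw [Finset.mem_singleton, hcnd.1]
        exact hJy j hcnd.2
      · rw [if_neg hcnd]
        exact (G.mem_neighborFinset _ _).2 hadj
    · intro i h
      have hgi : (codeg (tensorPow G k) (x ⟨i+1, h⟩) (y ⟨i, Nat.lt_of_succ_lt h⟩) : ℝ) ≤ s i ∧
          ∀ j, α ≤ (codeg G (x ⟨i+1, h⟩ j) (y ⟨i, Nat.lt_of_succ_lt h⟩ j) : ℝ) :=
        hg ⟨i, Nat.lt_of_succ_lt h⟩ h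
      rw [hCdef]
      simp only [dif_pos h]
      rw [if_pos hgi, Fintype.mem_piFinset]
      intro j
      have hadj1 : G.Adj (x ⟨i+1, h⟩ j) (y ⟨i+1, h⟩ j) := (show _ ∧ _ from h1 ⟨i+1, h⟩).2 j
      have hadj2 : G.Adj (y ⟨i, Nat.lt_of_succ_lt h⟩ j) (y ⟨i+1, h⟩ j) :=
        (show _ ∧ _ from (h2 ⟨i, Nat.lt_of_succ_lt h⟩ h).2).2 j
      have hmem : y ⟨i+1, h⟩ j ∈
          G.neighborFinset (x ⟨i+1, h⟩ j) ∩ G.neighborFinset (y ⟨i, Nat.lt_of_succ_lt h⟩ j) :=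
        Finset.mem_inter.2 ⟨(G.mem_neighborFinset _ _).2 hadj1, (G.mem_neighborFinset _ _).2 hadj2⟩
      by_cases hcnd : (⟨i+1, h⟩ : Fin (n+2)) = ℓ ∧ j ∈ J
      · rw [if_pos hcnd]
        refine Finset.mem_inter.2 ⟨hmem, ?_⟩
        rw [Finset.mem_singleton, hcnd.1]
        exact hJy j hcnd.2
      · rw [if_neg hcnd]
        exact hmem
  -- apply the chain bound
  have hb0 : (0:ℝ) ≤ b := by
    rw [hbdef]
    exact mul_nonneg (by positivity) (hite _)
  have hc0 : ∀ i, i < n + 1 → (0:ℝ) ≤ c i := by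
    intro i hi
    rw [hcdef]
    exact mul_nonneg (by linarith [hs i (by omega)]) (hite _)
  have hchain := chain_bound (n+1) B C c b hBcard hb0 hCcard hc0
  have hcount : (Nat.card {y : Fin (n+2) → (Fin k → V) //
      IsGoodLadder G k (n+2) α s x y ∧ ∀ j ∈ J, y ℓ j = u j} : ℝ) ≤ b * ∏ i ∈ range (n+1), c i := by
    refine le_trans ?_ hchain
    have hle : Nat.card {y : Fin (n+2) → (Fin k → V) //
        IsGoodLadder G k (n+2) α s x y ∧ ∀ j ∈ J, y ℓ j = u j} ≤
        ((univ : Finset (Fin (n+1+1) → (Fin k → V))).filter (fun y =>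
          y 0 ∈ B ∧ ∀ (i : ℕ) (h : i + 1 < n + 1 + 1),
            y ⟨i+1, h⟩ ∈ C i (y ⟨i, Nat.lt_of_succ_lt h⟩))).card := by
      rw [Nat.card_eq_fintype_card, Fintype.card_subtype]
      apply Finset.card_le_card
      intro y hy
      simp only [Finset.mem_filter, Finset.mem_univ, true_and] at hy ⊢
      exact himp y hy
    convert (Nat.cast_le (α := ℝ)).2 hle
    rfl
  -- compute the product of the step bounds
  have hprodc : ∏ i ∈ range (n+1), c i
      = (∏ i ∈ range (n+1), s i) * (if (ℓ : ℕ) = 0 then 1 else β) := by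
    rw [hcdef, Finset.prod_mul_distrib]
    congr 1
    rcases Nat.eq_zero_or_pos (ℓ : ℕ) with h0 | h0
    · rw [if_pos h0]
      exact Finset.prod_eq_one (fun i _ => if_neg (by omega))
    · rw [if_neg (by omega)]
      obtain ⟨m, hm⟩ : ∃ m, (ℓ : ℕ) = m + 1 := ⟨(ℓ : ℕ) - 1, by omega⟩
      have hmlt : m ∈ range (n+1) := by
        rw [Finset.mem_range]
        have := ℓ.isLt
        omega
      calc (∏ i ∈ range (n+1), if i + 1 = (ℓ : ℕ) then β else 1)
          = ∏ i ∈ range (n+1), (if i = m then β else 1) := by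
            refine Finset.prod_congr rfl (fun i _ => ?_)
            congr 1
            simp only [hm, eq_iff_iff]
            omega
        _ = β := by rw [Finset.prod_ite_eq' (range (n+1)) m (fun _ => β), if_pos hmlt]
  -- finish
  have hzpow : α ^ (-(J.card : ℤ)) = β := by
    rw [hβdef, zpow_neg, zpow_natCast]
  rw [hrange, hzpow]
  refine le_trans hcount ?_
  rw [hprodc, hbdef]
  rcases eq_or_ne (ℓ : ℕ) 0 with h0 | h0
  · rw [if_pos h0, if_pos h0]
    ring_nf
    exact le_refl _
  · rw [if_neg h0, if_neg h0]
    ring_nf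
    exact le_refl _
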